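/- If m is a state of a group G, then for all g, h ∈ G, |m(gh) - m(g)·m(h)| ≤ √(1 - |m(g)|²) · √(1 - |m(h)|²) (Weil's inequality). -/

import Mathlib

open scoped ComplexConjugate ComplexOrder

/-- **Weil's inequality.** If `m` is a state of a group `G`, then for all `g h`,
`|m (g h) - m g · m h| ≤ √(1 - |m g|²) · √(1 - |m h|²)`. -/
theorem weil_inequality {G : Type*} [Group G] (m : G → ℂ)
    (hone : m 1 = 1)
    (hpos : ∀ c : G →₀ ℂ,
      0 ≤ ∑ g ∈ c.support, ∑ h ∈ c.support, conj (c g) * c h * m (g⁻¹ * h)) :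
    ∀ g h : G, ‖m (g * h) - m g * m h‖
      ≤ Real.sqrt (1 - ‖m g‖ ^ 2) * Real.sqrt (1 - ‖m h‖ ^ 2) := by
  classical
  have key : ∀ (x y z : G) (u v w : ℂ),
      0 ≤ conj u * u * m (x⁻¹*x) + conj u * v * m (x⁻¹*y) + conj u * w * m (x⁻¹*z)
      + (conj v * u * m (y⁻¹*x) + conj v * v * m (y⁻¹*y) + conj v * w * m (y⁻¹*z))
      + (conj w * u * m (z⁻¹*x) + conj w * v * m (z⁻¹*y) + conj w * w * m (z⁻¹*z)) := by
    intro x y z u v w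
    set c : G →₀ ℂ := Finsupp.single x u + Finsupp.single y v + Finsupp.single z w with hc
    set S : Finset G := {x, y, z} with hS
    have hx : x ∈ S := by simp [hS]
    have hy : y ∈ S := by simp [hS]
    have hz : z ∈ S := by simp [hS]
    have hsub : c.support ⊆ S := by
      intro a ha
      by_contra hmem
      simp only [hS, Finset.mem_insert, Finset.mem_singleton, not_or] at hmem
      obtain ⟨h1, h2, h3⟩ := hmem
      apply Finsupp.mem_support_iff.mp ha
      simp [hc, Finsupp.single_apply, Ne.symm h1, Ne.symm h2, Ne.symm h3]
    have key := hpos c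
    rw [Finset.sum_subset hsub
      (fun g _ hgn => by simp [Finsupp.notMem_support_iff.mp hgn])] at key
    have : ∀ g ∈ S, (∑ h ∈ c.support, conj (c g) * c h * m (g⁻¹ * h))
        = ∑ h ∈ S, conj (c g) * c h * m (g⁻¹ * h) := by
      intro g _
      exact Finset.sum_subset hsub
        (fun h _ hhn => by simp [Finsupp.notMem_support_iff.mp hhn])
    rw [Finset.sum_congr rfl this] at key
    simp only [hc, Finsupp.add_apply, Finsupp.single_apply, map_add, apply_ite (conj : ℂ → ℂ),
      map_zero, add_mul, mul_add, ite_mul, zero_mul, mul_ite, mul_zero,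
      Finset.sum_add_distrib, Finset.sum_ite_eq, hx, hy, hz, if_true] at key
    exact key.trans_eq (by ring)
  have hsym : ∀ x : G, m x⁻¹ = conj (m x) := by
    intro x
    have h1 := key 1 x 1 1 1 0
    have h2 := key 1 x 1 1 Complex.I 0
    simp only [inv_one, one_mul, mul_one, map_one, map_zero, mul_zero, zero_mul, add_zero,
      zero_add, inv_mul_cancel, hone, Complex.conj_I, neg_mul, Complex.I_mul_I,
      neg_neg] at h1 h2
    have i1 := (Complex.le_def.mp h1).2
    have i2 := (Complex.le_def.mp h2).2
    simp [Complex.add_im, Complex.mul_im, Complex.one_im, Complex.one_re, Complex.I_re,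
      Complex.I_im, Complex.neg_re, Complex.neg_im, Complex.zero_im] at i1 i2
    apply Complex.ext <;> simp [Complex.conj_re, Complex.conj_im] <;> linarith
  have hbound : ∀ x : G, ‖m x‖ ^ 2 ≤ 1 := by
    intro x
    have h := key 1 x 1 1 (-(conj (m x))) 0
    simp only [inv_one, one_mul, mul_one, map_one, map_zero, mul_zero, zero_mul, add_zero,
      zero_add, inv_mul_cancel, hone, map_neg, Complex.conj_conj, hsym x] at h
    have := (Complex.le_def.mp h).1
    simp [Complex.zero_re, Complex.add_re, Complex.one_re, Complex.mul_re, Complex.neg_re,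
      Complex.neg_im, Complex.conj_re, Complex.conj_im] at this
    have habs := Complex.sq_norm (m x)
    simp only [Complex.normSq_apply] at habs
    nlinarith [Complex.sq_norm (m x)]
  intro g h
  set A := m g with hA
  set B := m h with hB
  set C := m (g * h) with hC
  set γ := C - A * B with hγ
  have hq : ∀ t : ℝ, 0 ≤ (1 - Complex.normSq B) * (t * t) + (-(2 * Complex.normSq γ)) * t
      + (1 - Complex.normSq A) * Complex.normSq γ := by
    intro t
    have hk := key 1 g⁻¹ h (-(conj A * γ) + B * t) γ (-(t : ℂ))
    rw [show (g⁻¹)⁻¹ * (1:G) = g by group, show h⁻¹ * g⁻¹ = (g*h)⁻¹ by group,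
        show (g⁻¹)⁻¹ * h = g * h by group, show (1:G)⁻¹ * g⁻¹ = g⁻¹ by group,
        show (1:G)⁻¹ * h = h by group, show h⁻¹ * (1:G) = h⁻¹ by group,
        show (1:G)⁻¹ * (1:G) = (1:G) by group, show (g⁻¹)⁻¹ * g⁻¹ = (1:G) by group,
        show h⁻¹ * h = (1:G) by group, hsym g, hsym h, hsym (g*h), hone, ← hA, ← hB, ← hC] at hk
    have heq : conj (-(conj A * γ) + B * ↑t) * (-(conj A * γ) + B * ↑t) * 1
        + conj (-(conj A * γ) + B * ↑t) * γ * conj A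
        + conj (-(conj A * γ) + B * ↑t) * (-(t:ℂ)) * B
        + (conj γ * (-(conj A * γ) + B * ↑t) * A + conj γ * γ * 1 + conj γ * (-(t:ℂ)) * C)
        + (conj (-(t:ℂ)) * (-(conj A * γ) + B * ↑t) * conj B + conj (-(t:ℂ)) * γ * conj C
          + conj (-(t:ℂ)) * (-(t:ℂ)) * 1)
        = (((1 - Complex.normSq B) * (t * t) + (-(2 * Complex.normSq γ)) * t
            + (1 - Complex.normSq A) * Complex.normSq γ : ℝ) : ℂ) := by
      push_cast
      simp only [← Complex.mul_conj, map_add, map_neg, map_mul, map_sub, Complex.conj_conj,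
        Complex.conj_ofReal, hγ]
      ring
    rw [heq] at hk
    exact_mod_cast hk
  have hd := discrim_le_zero hq
  rw [discrim] at hd
  have hng : Complex.normSq γ = ‖γ‖ ^ 2 := (Complex.sq_norm γ).symm
  have hnA : Complex.normSq A = ‖A‖ ^ 2 := (Complex.sq_norm A).symm
  have hnB : Complex.normSq B = ‖B‖ ^ 2 := (Complex.sq_norm B).symm
  rw [hng, hnA, hnB] at hd
  have hα : 0 ≤ 1 - ‖A‖ ^ 2 := by linarith [hbound g]
  have hβ : 0 ≤ 1 - ‖B‖ ^ 2 := by linarith [hbound h]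
  have hs : Real.sqrt (1 - ‖A‖ ^ 2) * Real.sqrt (1 - ‖B‖ ^ 2)
      = Real.sqrt ((1 - ‖A‖ ^ 2) * (1 - ‖B‖ ^ 2)) :=
    (Real.sqrt_mul hα _).symm
  rw [hs]
  rcases eq_or_ne (‖γ‖) 0 with h0 | h0
  · rw [h0]; exact Real.sqrt_nonneg _
  · have hpos' : 0 < ‖γ‖ ^ 2 := by positivity
    have : ‖γ‖ ^ 2 ≤ (1 - ‖A‖ ^ 2) * (1 - ‖B‖ ^ 2) := by
      nlinarith
    calc ‖γ‖ = Real.sqrt (‖γ‖ ^ 2) := by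
          rw [Real.sqrt_sq (norm_nonneg γ)]
      _ ≤ _ := Real.sqrt_le_sqrt this
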